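/- Let T be a clique tree of a chordal graph G, let A = A_0,...,A_{k-1},A_0 be an Euler tour of T, and let u be a vertex of G with u ∈ A_i = A_j, A(i,j) nonempty, and u in no clique occurring in A(i,j). Then at least one of the cliques occurring in A(i,j) is a leaf of T. -/

import Mathlib

open SimpleGraph

variable {V : Type*}

/-- A graph is chordal if it has no induced cycle of length at least four. -/
def Chordal (G : SimpleGraph V) : Prop :=
  ∀ n : ℕ, 4 ≤ n → IsEmpty (SimpleGraph.cycleGraph n ↪g G)

/-- `C` is a maximal clique of `G`. -/
def IsMaxClique (G : SimpleGraph V) (C : Set V) : Prop :=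
  G.IsClique C ∧ ∀ D : Set V, G.IsClique D → C ⊆ D → D = C

/-- A clique tree of a chordal graph `G`: a tree on the maximal cliques of `G`
such that for every vertex `v` of `G` the maximal cliques containing `v` induce
a (connected) subtree. -/
def IsCliqueTree (G : SimpleGraph V) (T : SimpleGraph {C : Set V // IsMaxClique G C}) : Prop :=
  T.IsTree ∧ ∀ v : V, (T.induce {C : {C : Set V // IsMaxClique G C} | v ∈ (C : Set V)}).Connected

/-- A leaf of a tree: a vertex with exactly one neighbour. -/
def IsTreeLeaf {α : Type*} (T : SimpleGraph α) (C : α) : Prop := ∃! C', T.Adj C C'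

/-- An Euler tour `A_0, A_1, …, A_{k-1}, A_0` of the tree `T` viewed as a symmetric
digraph: a closed walk traversing each directed arc exactly once and visiting every
vertex.  (The degenerate disjunct permits the constant tour on a single-vertex tree.) -/
def IsEulerTour {α : Type*} (T : SimpleGraph α) (k : ℕ) (A : ZMod k → α) : Prop :=
  0 < k ∧ Function.Surjective A ∧
  (∀ i : ZMod k, T.Adj (A i) (A (i + 1)) ∨ (A i = A (i + 1) ∧ ∀ a b : α, ¬ T.Adj a b)) ∧
  (∀ a b : α, T.Adj a b → ∃! i : ZMod k, A i = a ∧ A (i + 1) = b)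

/-- The set of positions strictly between position `i` and position `j` in the cyclic
order on `ZMod k` (the positions of the circular subsequence `A(i,j)`). -/
def cyclicBetween (k : ℕ) (i j : ZMod k) : Set (ZMod k) :=
  {t : ZMod k | ∃ m : ℕ, 0 < m ∧ m < (j - i).val ∧ t = i + (m : ZMod k)}

lemma key_euler {α : Type*} (T : SimpleGraph α) (hTree : T.IsTree)
    {k : ℕ} (A : ZMod k → α) (hA : IsEulerTour T k A) (hndeg : ∃ a b, T.Adj a b) :
    ∀ d : ℕ, ∀ i j : ZMod k, A i = A j → (j - i).val = d → 2 ≤ d →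
      ∃ t ∈ cyclicBetween k i j, IsTreeLeaf T (A t) := by
  haveI : NeZero k := ⟨hA.1.ne'⟩
  have hadj : ∀ t : ZMod k, T.Adj (A t) (A (t + 1)) := by
    intro t
    rcases hA.2.2.1 t with h | ⟨-, h⟩
    · exact h
    · obtain ⟨a, b, hab⟩ := hndeg; exact absurd hab (h a b)
  intro d
  induction d using Nat.strong_induction_on with
  | _ d IH =>
  intro i j hij hd hd2
  have hdk : d < k := hd ▸ ZMod.val_lt _
  -- position of arc (A i, A (i+1)) is unique (it is i)
  obtain ⟨p, hp, hpu⟩ := hA.2.2.2 (A i) (A (i + 1)) (hadj i)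
  have hiu : ∀ t : ZMod k, A t = A i → A (t + 1) = A (i + 1) → t = i := fun t h1 h2 =>
    (hpu t ⟨h1, h2⟩).trans (hpu i ⟨rfl, rfl⟩).symm
  -- position of the reversed arc
  obtain ⟨s, ⟨hs1, hs2⟩, hsu⟩ := hA.2.2.2 (A (i + 1)) (A i) (hadj i).symm
  set G' : SimpleGraph α := T \ SimpleGraph.fromEdgeSet {s(A i, A (i + 1))} with hG'def
  have hbr : ¬ G'.Reachable (A i) (A (i + 1)) := by
    have hB := isAcyclic_iff_forall_edge_isBridge.mp hTree.IsAcyclic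
      (show s(A i, A (i + 1)) ∈ T.edgeSet from hadj i)
    exact isBridge_iff.mp hB
  have step : ∀ t : ZMod k, t ≠ i → t ≠ s →
      (G'.Reachable (A i) (A t) ↔ G'.Reachable (A i) (A (t + 1))) := by
    intro t hti hts
    have hA' : G'.Adj (A t) (A (t + 1)) := by
      rw [hG'def, SimpleGraph.sdiff_adj]
      refine ⟨hadj t, ?_⟩
      rw [SimpleGraph.fromEdgeSet_adj]
      rintro ⟨he, -⟩
      rw [Set.mem_singleton_iff, Sym2.eq_iff] at he
      rcases he with ⟨h1, h2⟩ | ⟨h1, h2⟩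
      · exact hti (hiu t h1 h2)
      · exact hts (hsu t ⟨h1, h2⟩)
    exact ⟨fun h => h.trans hA'.reachable, fun h => h.trans hA'.symm.reachable⟩
  have falseSeq : ∀ n : ℕ, n ≤ (s - (i + 1)).val → ¬ G'.Reachable (A i) (A (i + 1 + n)) := by
    intro n
    induction n with
    | zero => intro _; simpa using hbr
    | succ n ihn =>
      intro hn
      have hnM : n < (s - (i + 1)).val := by omega
      have hnk : n < k := lt_trans hnM (ZMod.val_lt _)
      have hts : (i + 1 + (n : ZMod k)) ≠ s := by
        intro h
        have h2 : ((n : ℕ) : ZMod k) = s - (i + 1) := by rw [← h]; ring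
        have h3 := congrArg ZMod.val h2
        rw [ZMod.val_cast_of_lt hnk] at h3
        omega
      have hti : (i + 1 + (n : ZMod k)) ≠ i := by
        intro h
        have h2 : ((n + 1 : ℕ) : ZMod k) = 0 := by
          push_cast
          linear_combination h
        have hk := (ZMod.natCast_eq_zero_iff _ _).mp h2
        have := Nat.le_of_dvd (Nat.succ_pos n) hk
        have := ZMod.val_lt (s - (i + 1))
        omega
      have harith : i + 1 + ((n + 1 : ℕ) : ZMod k) = (i + 1 + (n : ZMod k)) + 1 := by
        push_cast; ring
      rw [harith]
      exact fun hc => ihn (le_of_lt hnM) ((step _ hti hts).mpr hc)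
  have hMd : (s - (i + 1)).val + 2 ≤ d := by
    by_contra hc
    have h1 : d - 1 ≤ (s - (i + 1)).val := by omega
    have h2 := falseSeq (d - 1) h1
    have hji : j - i = ((d : ℕ) : ZMod k) := by rw [← hd, ZMod.natCast_zmod_val]
    have harith : i + 1 + ((d - 1 : ℕ) : ZMod k) = j := by
      have hd1 : ((d - 1 : ℕ) : ZMod k) = ((d : ℕ) : ZMod k) - 1 := by
        push_cast [Nat.cast_sub (show 1 ≤ d by omega)]
        ring
      rw [hd1, ← hji]; ring
    rw [harith, hij] at h2
    exact h2 (Reachable.refl _)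
  have trueSeq : ∀ n : ℕ, n ≤ (i - (s + 1)).val → G'.Reachable (A i) (A (s + 1 + n)) := by
    intro n
    induction n with
    | zero =>
      intro _
      simp only [Nat.cast_zero, add_zero]
      rw [hs2]
    | succ n ihn =>
      intro hn
      have hnN : n < (i - (s + 1)).val := by omega
      have hnk : n < k := lt_trans hnN (ZMod.val_lt _)
      have hti : (s + 1 + (n : ZMod k)) ≠ i := by
        intro h
        have h2 : ((n : ℕ) : ZMod k) = i - (s + 1) := by rw [← h]; ring
        have h3 := congrArg ZMod.val h2
        rw [ZMod.val_cast_of_lt hnk] at h3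
        omega
      have hts : (s + 1 + (n : ZMod k)) ≠ s := by
        intro h
        have h2 : ((n + 1 : ℕ) : ZMod k) = 0 := by
          push_cast
          linear_combination h
        have hk := (ZMod.natCast_eq_zero_iff _ _).mp h2
        have := Nat.le_of_dvd (Nat.succ_pos n) hk
        have := ZMod.val_lt (i - (s + 1))
        omega
      have harith : s + 1 + ((n + 1 : ℕ) : ZMod k) = (s + 1 + (n : ZMod k)) + 1 := by
        push_cast; ring
      rw [harith]
      exact (step _ hti hts).mp (ihn (by omega))
  have hsval : (((s - (i + 1)).val : ℕ) : ZMod k) = s - (i + 1) := ZMod.natCast_zmod_val _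
  have trueAll : ∀ t : ZMod k, (s - (i + 1)).val < (t - (i + 1)).val →
      G'.Reachable (A i) (A t) := by
    intro t hMt
    have hak : (t - (i + 1)).val < k := ZMod.val_lt _
    have hN : i - (s + 1) = -((((s - (i + 1)).val + 2 : ℕ)) : ZMod k) := by
      push_cast
      rw [hsval]; ring
    have hNval : (i - (s + 1)).val = k - ((s - (i + 1)).val + 2) := by
      rw [hN, ZMod.neg_val]
      split_ifs with h0
      · exfalso
        have := congrArg ZMod.val h0
        rw [ZMod.val_cast_of_lt (show (s - (i + 1)).val + 2 < k by omega), ZMod.val_zero] at this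
        omega
      · rw [ZMod.val_cast_of_lt (show (s - (i + 1)).val + 2 < k by omega)]
    have hta : (((t - (i + 1)).val : ℕ) : ZMod k) = t - (i + 1) := ZMod.natCast_zmod_val _
    have harith : s + 1 + (((t - (i + 1)).val - ((s - (i + 1)).val + 1) : ℕ) : ZMod k) = t := by
      have h1 : (((t - (i + 1)).val - ((s - (i + 1)).val + 1) : ℕ) : ZMod k)
          = (((t - (i + 1)).val : ℕ) : ZMod k) - (((s - (i + 1)).val + 1 : ℕ) : ZMod k) := by
        push_cast [Nat.cast_sub (show (s - (i + 1)).val + 1 ≤ (t - (i + 1)).val by omega)]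
        ring
      rw [h1, hta]
      push_cast
      rw [hsval]; ring
    have hle : (t - (i + 1)).val - ((s - (i + 1)).val + 1) ≤ (i - (s + 1)).val := by
      rw [hNval]; omega
    have := trueSeq _ hle
    rwa [harith] at this
  have falseOnly : ∀ t : ZMod k, A t = A (i + 1) → (t - (i + 1)).val ≤ (s - (i + 1)).val := by
    intro t ht
    by_contra hc
    push_neg at hc
    have := trueAll t hc
    rw [ht] at this
    exact hbr this
  have hsM : s = i + 1 + (((s - (i + 1)).val : ℕ) : ZMod k) := by rw [hsval]; ring
  by_cases hM0 : (s - (i + 1)).val = 0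
  · have hs_eq : s = i + 1 := by rw [hsM, hM0]; simp
    have hAi2 : A (i + 1 + 1) = A i := by rw [← hs_eq]; exact hs2
    by_cases hd3 : d = 2
    · refine ⟨i + 1, ⟨1, one_pos, by omega, by push_cast; ring⟩, ?_⟩
      refine ⟨A i, (hadj i).symm, ?_⟩
      intro y hy
      obtain ⟨q, ⟨hq1, hq2⟩, -⟩ := hA.2.2.2 (A (i + 1)) y hy
      have hqle := falseOnly q hq1
      have hq0 : q - (i + 1) = 0 := (ZMod.val_eq_zero _).mp (by omega)
      have hqi : q = i + 1 := by rwa [sub_eq_zero] at hq0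
      rw [← hq2, hqi, hAi2]
    · have hji : j - i = ((d : ℕ) : ZMod k) := by rw [← hd, ZMod.natCast_zmod_val]
      by_cases hd4 : d = 3
      · exfalso
        have hj3 : j = i + 1 + 1 + 1 := by
          have : j = i + ((d : ℕ) : ZMod k) := by rw [← hji]; ring
          rw [this, hd4]; push_cast; ring
        have hcon := hadj (i + 1 + 1)
        rw [hAi2, ← hj3, ← hij] at hcon
        exact hcon.ne rfl
      · have hval2 : (j - (i + 1 + 1)).val = d - 2 := by
          have h1 : j - (i + 1 + 1) = ((d - 2 : ℕ) : ZMod k) := by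
            have h2 : ((d - 2 : ℕ) : ZMod k) = ((d : ℕ) : ZMod k) - 2 := by
              push_cast [Nat.cast_sub (show 2 ≤ d from hd2)]
              ring
            rw [h2, ← hji]; ring
          rw [h1, ZMod.val_cast_of_lt (by omega : d - 2 < k)]
        obtain ⟨t, ⟨m, hm0, hmlt, htm⟩, hleaf⟩ :=
          IH (d - 2) (by omega) (i + 1 + 1) j (by rw [hAi2, hij]) hval2 (by omega)
        refine ⟨t, ⟨m + 2, by omega, by rw [hval2] at hmlt; omega, ?_⟩, hleaf⟩
        rw [htm]; push_cast; ring
  · by_cases hM1 : (s - (i + 1)).val = 1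
    · exfalso
      have hs_eq : s = i + 1 + 1 := by rw [hsM, hM1]; push_cast; ring
      have hcon : A (i + 1 + 1) = A (i + 1) := by rw [← hs_eq]; exact hs1
      exact (hadj (i + 1)).ne hcon.symm
    · obtain ⟨t, ⟨m, hm0, hmlt, htm⟩, hleaf⟩ :=
        IH ((s - (i + 1)).val) (by omega) (i + 1) s hs1.symm rfl (by omega)
      refine ⟨t, ⟨m + 1, by omega, by omega, ?_⟩, hleaf⟩
      rw [htm]; push_cast; ring

/-- If `u ∈ A_i = A_j`, `A(i,j)` is nonempty and `u` lies in no clique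
occurring there, then some clique occurring in `A(i,j)` is a leaf of `T`. -/
theorem eulerTour_gap_contains_leaf [Fintype V] (G : SimpleGraph V) (hG : Chordal G)
    (T : SimpleGraph {C : Set V // IsMaxClique G C}) (hT : IsCliqueTree G T)
    (k : ℕ) (A : ZMod k → {C : Set V // IsMaxClique G C}) (hA : IsEulerTour T k A)
    (u : V) (i j : ZMod k) (hi : u ∈ (A i : Set V)) (hj : u ∈ (A j : Set V))
    (hij : A i = A j) (hne : (cyclicBetween k i j).Nonempty)
    (hno : ∀ t ∈ cyclicBetween k i j, u ∉ (A t : Set V)) :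
    ∃ t ∈ cyclicBetween k i j, IsTreeLeaf T (A t) := by
  haveI : NeZero k := ⟨hA.1.ne'⟩
  by_cases hndeg : ∃ a b, T.Adj a b
  · obtain ⟨t, m, hm0, hmlt, -⟩ := hne
    exact key_euler T hT.1 A hA hndeg ((j - i).val) i j hij rfl (by omega)
  · exfalso
    push_neg at hndeg
    have hconst : ∀ n : ℕ, A (i + n) = A i := by
      intro n
      induction n with
      | zero => simp
      | succ n ihn =>
        have hstep := (hA.2.2.1 (i + n)).resolve_left (hndeg _ _)
        have harith : i + ((n + 1 : ℕ) : ZMod k) = (i + (n : ZMod k)) + 1 := by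
          push_cast; ring
        rw [harith, ← hstep.1, ihn]
    obtain ⟨t, m, hm0, hmlt, htm⟩ := hne
    refine hno t ⟨m, hm0, hmlt, htm⟩ ?_
    rw [htm, hconst m]
    exact hi
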